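/- Let f, g, h be self-maps of a metric space (X,d) such that the pairs (f,h) and (g,h) are each subcompatible and subsequentially continuous with a common witnessing sequence. Let 0 < a < 1, α, β ∈ (0,1], p a positive integer, and F : ℝ₊ → ℝ₊ upper semicontinuous with F(t) < t for every t > 0. Suppose that for all x, y ∈ X: d(fx,gy)^p ≤ F( a·d(hx,hy)^p + (1−a)·max{ α·d(fx,hx)^p, β·d(gy,hy)^p, d(fx,hx)^{p/2}·d(fx,hy)^{p/2}, d(fx,hy)^{p/2}·d(hx,gy)^{p/2}, (d(fx,hx)^p + d(gy,hy)^p)/2 } ). Then f, g and h have a unique common fixed point. -/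

import Mathlib

open Filter Topology NNReal

/-- The pair `(f, g)` of self-maps of a metric space is subcompatible and
subsequentially continuous with a common witnessing sequence: there is a
sequence `x` and a point `t` with `lim f xₙ = lim g xₙ = t`,
`lim d(f (g xₙ), g (f xₙ)) = 0`, `lim f (g xₙ) = f t` and `lim g (f xₙ) = g t`. -/
def SubcompSubseqCont {X : Type*} [MetricSpace X] (f g : X → X) : Prop :=
  ∃ (x : ℕ → X) (t : X),
    Tendsto (fun n => f (x n)) atTop (𝓝 t) ∧
    Tendsto (fun n => g (x n)) atTop (𝓝 t) ∧
    Tendsto (fun n => dist (f (g (x n))) (g (f (x n)))) atTop (𝓝 (0 : ℝ)) ∧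
    Tendsto (fun n => f (g (x n))) atTop (𝓝 (f t)) ∧
    Tendsto (fun n => g (f (x n))) atTop (𝓝 (g t))

theorem common_fixed_point_gregus_three_maps {X : Type*} [MetricSpace X]
    (f g h : X → X)
    (hfh : SubcompSubseqCont f h) (hgh : SubcompSubseqCont g h)
    (a α β : ℝ≥0) (ha0 : 0 < a) (ha1 : a < 1)
    (hα : 0 < α ∧ α ≤ 1) (hβ : 0 < β ∧ β ≤ 1)
    (p : ℕ) (hp : 0 < p)
    (F : ℝ≥0 → ℝ≥0) (hFusc : UpperSemicontinuous F)
    (hF : ∀ t : ℝ≥0, 0 < t → F t < t)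
    (hineq : ∀ x y : X,
      nndist (f x) (g y) ^ p ≤
        F (a * nndist (h x) (h y) ^ p + (1 - a) *
          max (max (max (max (α * nndist (f x) (h x) ^ p)
            (β * nndist (g y) (h y) ^ p))
            (nndist (f x) (h x) ^ ((p : ℝ) / 2) * nndist (f x) (h y) ^ ((p : ℝ) / 2)))
            (nndist (f x) (h y) ^ ((p : ℝ) / 2) * nndist (h x) (g y) ^ ((p : ℝ) / 2)))
            ((nndist (f x) (h x) ^ p + nndist (g y) (h y) ^ p) / 2))) :
    ∃! t : X, f t = t ∧ g t = t ∧ h t = t := by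
  obtain ⟨x, t, hfx, hhx, hdx, hfhx, hhfx⟩ := hfh
  obtain ⟨y, u, hgy, hhy, hdy, hghy, hhgy⟩ := hgh
  have hpR : (0:ℝ) < (p:ℝ)/2 := by positivity
  have hq0 : ((p:ℝ)/2) ≠ 0 := ne_of_gt hpR
  have key : ∀ w : ℝ≥0, w ≤ F w → w = 0 := by
    intro w hw
    by_contra h0
    exact absurd hw (not_le.2 (hF w (pos_iff_ne_zero.2 h0)))
  have hrp : ∀ c : ℝ≥0, c ^ ((p:ℝ)/2) * c ^ ((p:ℝ)/2) = c ^ p := by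
    intro c
    rw [← NNReal.rpow_add' (by rw [← two_mul]; positivity) c, ← two_mul,
      mul_div_cancel₀ _ (two_ne_zero), NNReal.rpow_natCast]
  have hsum : ∀ w : ℝ≥0, a * w + (1 - a) * w = w := by
    intro w
    rw [← add_mul, add_tsub_cancel_of_le ha1.le, one_mul]
  have h1a : (0:ℝ≥0) < 1 - a := tsub_pos_of_lt ha1
  have zmaxl : ∀ w : ℝ≥0, max w 0 = w := fun w => max_eq_left (zero_le (a := w))
  have zmaxr : ∀ w : ℝ≥0, max 0 w = w := fun w => max_eq_right (zero_le (a := w))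
  -- coincidence at t : f t = h t
  have hfht : f t = h t := by
    have h1 : Tendsto (fun n => dist (f (h (x n))) (h (f (x n)))) atTop
        (𝓝 (dist (f t) (h t))) := hfhx.dist hhfx
    exact dist_eq_zero.mp (tendsto_nhds_unique h1 hdx)
  -- coincidence at u : g u = h u
  have hghu : g u = h u := by
    have h1 : Tendsto (fun n => dist (g (h (y n))) (h (g (y n)))) atTop
        (𝓝 (dist (g u) (h u))) := hghy.dist hhgy
    exact dist_eq_zero.mp (tendsto_nhds_unique h1 hdy)
  -- the limit argument : t = h u
  set c : ℝ≥0 := nndist t (h u) with hc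
  have hL : Tendsto (fun n => nndist (f (x n)) (g u) ^ p) atTop (𝓝 (c ^ p)) := by
    have h0 : Tendsto (fun n => nndist (f (x n)) (g u)) atTop (𝓝 (nndist t (g u))) :=
      hfx.nndist tendsto_const_nhds
    have hcc : nndist t (g u) = c := by rw [hghu]
    rw [hcc] at h0
    exact h0.pow p
  have e1 : Tendsto (fun n => nndist (h (x n)) (h u)) atTop (𝓝 c) :=
    hhx.nndist tendsto_const_nhds
  have e2 : Tendsto (fun n => nndist (f (x n)) (h (x n))) atTop (𝓝 0) := by
    have := hfx.nndist hhx
    simpa using this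
  have e3 : Tendsto (fun n => nndist (f (x n)) (h u)) atTop (𝓝 c) :=
    hfx.nndist tendsto_const_nhds
  have e4 : Tendsto (fun n => nndist (h (x n)) (g u)) atTop (𝓝 c) := by
    have h0 : Tendsto (fun n => nndist (h (x n)) (g u)) atTop (𝓝 (nndist t (g u))) :=
      hhx.nndist tendsto_const_nhds
    have hcc : nndist t (g u) = c := by rw [hghu]
    rwa [hcc] at h0
  have hA : Tendsto (fun n =>
      a * nndist (h (x n)) (h u) ^ p + (1 - a) *
        max (max (max (max (α * nndist (f (x n)) (h (x n)) ^ p)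
          (β * nndist (g u) (h u) ^ p))
          (nndist (f (x n)) (h (x n)) ^ ((p : ℝ) / 2) * nndist (f (x n)) (h u) ^ ((p : ℝ) / 2)))
          (nndist (f (x n)) (h u) ^ ((p : ℝ) / 2) * nndist (h (x n)) (g u) ^ ((p : ℝ) / 2)))
          ((nndist (f (x n)) (h (x n)) ^ p + nndist (g u) (h u) ^ p) / 2)) atTop
      (𝓝 (c ^ p)) := by
    have big : Tendsto (fun n =>
      a * nndist (h (x n)) (h u) ^ p + (1 - a) *
        max (max (max (max (α * nndist (f (x n)) (h (x n)) ^ p)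
          (β * nndist (g u) (h u) ^ p))
          (nndist (f (x n)) (h (x n)) ^ ((p : ℝ) / 2) * nndist (f (x n)) (h u) ^ ((p : ℝ) / 2)))
          (nndist (f (x n)) (h u) ^ ((p : ℝ) / 2) * nndist (h (x n)) (g u) ^ ((p : ℝ) / 2)))
          ((nndist (f (x n)) (h (x n)) ^ p + nndist (g u) (h u) ^ p) / 2)) atTop
      (𝓝 (a * c ^ p + (1 - a) *
        max (max (max (max (α * (0:ℝ≥0) ^ p) (β * nndist (g u) (h u) ^ p))
          ((0:ℝ≥0) ^ ((p : ℝ) / 2) * c ^ ((p : ℝ) / 2)))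
          (c ^ ((p : ℝ) / 2) * c ^ ((p : ℝ) / 2)))
          (((0:ℝ≥0) ^ p + nndist (g u) (h u) ^ p) / 2))) := by
      refine Tendsto.add (tendsto_const_nhds.mul (e1.pow p)) (tendsto_const_nhds.mul ?_)
      refine Tendsto.max (Tendsto.max (Tendsto.max (Tendsto.max ?_ tendsto_const_nhds) ?_) ?_) ?_
      · exact tendsto_const_nhds.mul (e2.pow p)
      · exact (e2.nnrpow tendsto_const_nhds (Or.inr hpR)).mul
          (e3.nnrpow tendsto_const_nhds (Or.inr hpR))
      · exact (e3.nnrpow tendsto_const_nhds (Or.inr hpR)).mul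
          (e4.nnrpow tendsto_const_nhds (Or.inr hpR))
      · exact ((e2.pow p).add tendsto_const_nhds).div_const 2
    have hgu0 : nndist (g u) (h u) = 0 := by rw [hghu, nndist_self]
    have heq : a * c ^ p + (1 - a) *
        max (max (max (max (α * (0:ℝ≥0) ^ p) (β * nndist (g u) (h u) ^ p))
          ((0:ℝ≥0) ^ ((p : ℝ) / 2) * c ^ ((p : ℝ) / 2)))
          (c ^ ((p : ℝ) / 2) * c ^ ((p : ℝ) / 2)))
          (((0:ℝ≥0) ^ p + nndist (g u) (h u) ^ p) / 2) = c ^ p := by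
      rw [hgu0, hrp c, zero_pow hp.ne', NNReal.zero_rpow hq0]
      simp only [mul_zero, zero_mul, max_self, zero_add, add_zero, zero_div, zmaxl, zmaxr]
      exact hsum _
    rwa [heq] at big
  have hDF : c ^ p ≤ F (c ^ p) := by
    by_contra hcon
    push_neg at hcon
    obtain ⟨z, hz1, hz2⟩ := exists_between hcon
    have hev : ∀ᶠ n in atTop, F (a * nndist (h (x n)) (h u) ^ p + (1 - a) *
        max (max (max (max (α * nndist (f (x n)) (h (x n)) ^ p)
          (β * nndist (g u) (h u) ^ p))
          (nndist (f (x n)) (h (x n)) ^ ((p : ℝ) / 2) * nndist (f (x n)) (h u) ^ ((p : ℝ) / 2)))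
          (nndist (f (x n)) (h u) ^ ((p : ℝ) / 2) * nndist (h (x n)) (g u) ^ ((p : ℝ) / 2)))
          ((nndist (f (x n)) (h (x n)) ^ p + nndist (g u) (h u) ^ p) / 2)) < z :=
      hA.eventually (hFusc (c ^ p) z hz1)
    have hev2 : ∀ᶠ n in atTop, nndist (f (x n)) (g u) ^ p ≤ z :=
      hev.mono fun n hn => le_of_lt (lt_of_le_of_lt (hineq (x n) u) hn)
    have hle : c ^ p ≤ z := le_of_tendsto hL hev2
    exact absurd (lt_of_le_of_lt hle hz2) (lt_irrefl _)
  have hc0 : c = 0 := pow_eq_zero_iff hp.ne' |>.mp (key _ hDF)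
  have hhu : h u = t := (nndist_eq_zero.mp hc0).symm
  have hgu : g u = t := by rw [hghu, hhu]
  -- f t = t
  have hft : f t = t := by
    have H := hineq t u
    rw [hhu, hgu, ← hfht] at H
    simp only [nndist_self, zero_pow hp.ne', NNReal.zero_rpow hq0, mul_zero, zero_mul,
      zero_add, add_zero, zero_div, max_self, zmaxl, zmaxr, hrp] at H
    rw [hsum] at H
    exact nndist_eq_zero.mp (pow_eq_zero_iff hp.ne' |>.mp (key _ H))
  have hht : h t = t := by rw [← hfht, hft]
  -- g t = t
  have hgt : g t = t := by
    have H := hineq t t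
    rw [hht, hft, nndist_comm t (g t)] at H
    simp only [nndist_self, zero_pow hp.ne', NNReal.zero_rpow hq0, mul_zero, zero_mul,
      zero_add, add_zero, zero_div, max_self, zmaxl, zmaxr] at H
    by_contra hne
    set E : ℝ≥0 := nndist (g t) t with hE
    have hEpos : 0 < E := pos_iff_ne_zero.2 fun h0 => hne (nndist_eq_zero.mp h0)
    have hEp : 0 < E ^ p := pow_pos hEpos p
    set M : ℝ≥0 := (1 - a) * max (β * E ^ p) (E ^ p / 2) with hM
    have hMpos : 0 < M := mul_pos h1a (lt_of_lt_of_le (div_pos hEp two_pos) (le_max_right _ _))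
    have hMle : M ≤ E ^ p := by
      calc M ≤ 1 * E ^ p := by
              refine mul_le_mul' tsub_le_self (max_le ?_ ?_)
              · exact mul_le_of_le_one_left (zero_le) hβ.2
              · exact div_le_self (zero_le) one_le_two
        _ = E ^ p := one_mul _
    have hfinal : E ^ p < E ^ p := lt_of_le_of_lt H ((hF M hMpos).trans_le hMle)
    exact lt_irrefl _ hfinal
  -- uniqueness
  refine ⟨t, ⟨hft, hgt, hht⟩, ?_⟩
  rintro s ⟨hfs, hgs, hhs⟩
  have H := hineq s t
  rw [hfs, hgt, hht, hhs] at H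
  simp only [nndist_self, zero_pow hp.ne', NNReal.zero_rpow hq0, mul_zero, zero_mul,
    zero_add, add_zero, zero_div, max_self, zmaxl, zmaxr, hrp] at H
  rw [hsum] at H
  exact nndist_eq_zero.mp (pow_eq_zero_iff hp.ne' |>.mp (key _ H))
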